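/- Let 𝔞_• and 𝔟_• be filtrations of ideals in a Noetherian commutative ring S, and let 𝔟'_• be a graded family of ideals such that 𝔟_i ⊆ 𝔟'_i for all i ≥ 1. Suppose there exists k ∈ ℕ such that 𝔟'_{i+k} ⊆ 𝔟_i for all i ∈ ℕ. Then ρ̂(𝔞_•, 𝔟'_•) = ρ̂(𝔞_•, 𝔟_•). -/

import Mathlib

open Filter Polynomial
open scoped ENNReal NNReal

set_option synthInstance.maxHeartbeats 1000000
set_option maxHeartbeats 1000000

universe u

section Preamble

variable {S : Type u} [CommRing S]

/-- A graded family of ideals: `a 0 = S` and `a p * a q ⊆ a (p + q)` for all `p, q`. -/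
def GradedFamily (a : ℕ → Ideal S) : Prop :=
  a 0 = ⊤ ∧ ∀ p q : ℕ, a p * a q ≤ a (p + q)

/-- A filtration of ideals: a graded family which is descending. -/
def IdealFiltration (a : ℕ → Ideal S) : Prop :=
  GradedFamily a ∧ ∀ p : ℕ, a (p + 1) ≤ a p

/-- The integral closure of an ideal `I`: the ideal of all elements `x` satisfying an
equation of integral dependence `x ^ n + c 1 * x ^ (n - 1) + ⋯ + c n = 0` with `c i ∈ I ^ i`. -/
noncomputable def intClosure (I : Ideal S) : Ideal S :=
  Ideal.span {x : S | ∃ n : ℕ, 0 < n ∧ ∃ c : ℕ → S,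
    (∀ i, 1 ≤ i → i ≤ n → c i ∈ I ^ i) ∧
    x ^ n + ∑ i ∈ Finset.Icc 1 n, c i * x ^ (n - i) = 0}

/-- The resurgence `ρ(a, b) = sup { s / r : ¬ a s ⊆ b r }` (as an extended real number,
with `sSup ∅ = ⊥`). -/
noncomputable def resurgence (a b : ℕ → Ideal S) : EReal :=
  sSup {x : EReal | ∃ s r : ℕ, 0 < s ∧ 0 < r ∧ ¬ a s ≤ b r ∧
    x = (((s : ℝ) / (r : ℝ) : ℝ) : EReal)}

/-- The asymptotic resurgence `ρ̂(a, b) = sup { s / r : ¬ a (s*t) ⊆ b (r*t) for all t ≫ 1}`. -/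
noncomputable def asympResurgence (a b : ℕ → Ideal S) : EReal :=
  sSup {x : EReal | ∃ s r : ℕ, 0 < s ∧ 0 < r ∧
    (∀ᶠ t : ℕ in atTop, ¬ a (s * t) ≤ b (r * t)) ∧
    x = (((s : ℝ) / (r : ℝ) : ℝ) : EReal)}

/-- The `k`-th Veronese subalgebra of the Rees algebra of the graded family `b` is a
standard graded `S`-algebra, i.e. `b (k*n) = (b k) ^ n` for all `n ≥ 1`. -/
def StdVeronese (b : ℕ → Ideal S) (k : ℕ) : Prop :=
  ∀ n : ℕ, 1 ≤ n → b (k * n) = b k ^ n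

/-- The Rees algebra `ℛ(b) = ⊕ₙ bₙ tⁿ ⊆ S[t]` of a graded family, as a set of polynomials. -/
def ReesSet (b : ℕ → Ideal S) : Set (Polynomial S) :=
  {p : Polynomial S | ∀ n : ℕ, p.coeff n ∈ b n}

/-- `ℛ(b')` is a finitely generated `ℛ(b)`-module: there is a finite set `G ⊆ ℛ(b')`
such that every element of `ℛ(b')` is an `ℛ(b)`-linear combination of elements of `G`. -/
def ReesFGModule (b b' : ℕ → Ideal S) : Prop :=
  ∃ G : Finset (Polynomial S), (G : Set (Polynomial S)) ⊆ ReesSet b' ∧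
    ∀ p ∈ ReesSet b', ∃ c : Polynomial S → Polynomial S,
      (∀ g ∈ G, c g ∈ ReesSet b) ∧ p = ∑ g ∈ G, c g * g

/-- A graded family `b` is `bb`-equivalent (for an ideal `bb`) if for some `k`,
`b (i + k) ⊆ bb ^ i ⊆ b i` for all `i ≥ 1`. -/
def BEquivalent (bb : Ideal S) (b : ℕ → Ideal S) : Prop :=
  ∃ k : ℕ, ∀ i : ℕ, 1 ≤ i → b (i + k) ≤ bb ^ i ∧ bb ^ i ≤ b i

/-- `β_n(a, b) = inf { d ≥ 1 : ¬ a n ⊆ b d }`, with `inf ∅ = ∞`. -/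
noncomputable def betaIdx (a b : ℕ → Ideal S) (n : ℕ) : ℕ∞ :=
  sInf {d : ℕ∞ | ∃ m : ℕ, 0 < m ∧ ¬ a n ≤ b m ∧ d = (m : ℕ∞)}

/-- `ρ^n(a, b) = sup { s / β_s(a, b) : s ≥ n, β_s(a, b) < ∞ }`. -/
noncomputable def rhoN (a b : ℕ → Ideal S) (n : ℕ) : EReal :=
  sSup {x : EReal | ∃ s d : ℕ, n ≤ s ∧ 0 < s ∧ betaIdx a b s = (d : ℕ∞) ∧
    x = (((s : ℝ) / (d : ℝ) : ℝ) : EReal)}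

/-- `ρ^lim(a, b) = lim_{n → ∞} ρ^n(a, b)`, the limit of the nonincreasing sequence `ρ^n`,
i.e. its infimum. -/
noncomputable def rhoLim (a b : ℕ → Ideal S) : EReal :=
  ⨅ n : ℕ, rhoN a b n

end Preamble

section Valuations

variable {S : Type u} [CommRing S] [IsDomain S]

/-- A (discrete) valuation of the quotient field `K` of `S`: a function `v : K → ℤ` with
`v (x * y) = v x + v y` and `v (x + y) ≥ min (v x) (v y)` (for nonzero elements). -/
structure ValuationOn (S : Type u) [CommRing S] [IsDomain S] where
  v : FractionRing S → ℤ
  map_mul : ∀ x y : FractionRing S, x ≠ 0 → y ≠ 0 → v (x * y) = v x + v y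
  min_le_map_add : ∀ x y : FractionRing S, x ≠ 0 → y ≠ 0 → x + y ≠ 0 →
    min (v x) (v y) ≤ v (x + y)

/-- A valuation of the quotient field is supported on `S` if it is nonnegative on `S`. -/
def ValuationOn.Supported (w : ValuationOn S) : Prop :=
  ∀ x : S, x ≠ 0 → 0 ≤ w.v (algebraMap S (FractionRing S) x)

/-- `v(I) = min { v x : x ∈ I, x ≠ 0 }`. -/
noncomputable def idealVal (w : ValuationOn S) (I : Ideal S) : ℤ :=
  sInf {m : ℤ | ∃ x ∈ I, x ≠ 0 ∧ w.v (algebraMap S (FractionRing S) x) = m}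

/-- The skew Waldschmidt constant `v̂(a) = inf_{n ≥ 1} v(a n) / n (= lim_{n → ∞} v(a n)/n)`. -/
noncomputable def skewWald (w : ValuationOn S) (a : ℕ → Ideal S) : ℝ :=
  sInf {t : ℝ | ∃ n : ℕ, 0 < n ∧ t = (idealVal w (a n) : ℝ) / (n : ℝ)}

/-- `β_n^v(a, b) = inf { d ≥ 1 : v(a n) < v(b d) }`, with `inf ∅ = ∞`. -/
noncomputable def betaVal (w : ValuationOn S) (a b : ℕ → Ideal S) (n : ℕ) : ℕ∞ :=
  sInf {d : ℕ∞ | ∃ m : ℕ, 0 < m ∧ idealVal w (a n) < idealVal w (b m) ∧ d = (m : ℕ∞)}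

end Valuations

section Domains

/-- `S` is a finitely generated algebra over a field. -/
structure FieldBase (S : Type u) [CommRing S] where
  F : Type u
  [fld : Field F]
  [alg : Algebra F S]
  fg : Algebra.FiniteType F S

/-- `S` is finitely generated over a Noetherian integrally closed domain `R` with the
property that every finitely generated `R`-algebra (domain) has module-finite integral
closure (in its fraction field). -/
structure NagataBase (S : Type u) [CommRing S] where
  R : Type u
  [cring : CommRing R]
  [dom : IsDomain R]
  [noeth : IsNoetherianRing R]
  [intClosed : IsIntegrallyClosed R]
  [alg : Algebra R S]
  fg : Algebra.FiniteType R S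
  finiteIntegralClosure : ∀ (A : Type u) [CommRing A] [IsDomain A] [Algebra R A],
    Algebra.FiniteType R A → Module.Finite A (integralClosure A (FractionRing A))

/-- `S` is a complete local Noetherian ring, or finitely generated over a field or over `ℤ`,
or, more generally, finitely generated over a Noetherian integrally closed domain `R` such
that every finitely generated `R`-algebra has a module-finite integral closure. -/
def AdmissibleDomain (S : Type u) [CommRing S] : Prop :=
  (IsNoetherianRing S ∧ ∃ m : Ideal S, m.IsMaximal ∧ (∀ I : Ideal S, I.IsMaximal → I = m) ∧
    IsAdicComplete m S)
  ∨ Nonempty (FieldBase S) ∨ Algebra.FiniteType ℤ S ∨ Nonempty (NagataBase S)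

end Domains
/-- **Corollary.** Let `a`, `b` be filtrations of ideals in a Noetherian ring `S` and `b'` a
graded family with `b ≤ b'` and `b' (i + k) ⊆ b i` for all `i ≥ 1`, for some `k`. Then
`ρ̂(a, b') = ρ̂(a, b)`. -/
theorem statement5 {S : Type u} [CommRing S] [IsNoetherianRing S]
    (a b b' : ℕ → Ideal S) (ha : IdealFiltration a) (hb : IdealFiltration b)
    (hb' : GradedFamily b')
    (hle : ∀ i : ℕ, 1 ≤ i → b i ≤ b' i)
    (k : ℕ) (hk : 0 < k) (hcon : ∀ i : ℕ, 1 ≤ i → b' (i + k) ≤ b i) :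
    asympResurgence a b' = asympResurgence a b := by
  have hbmono : Antitone b := antitone_nat_of_succ_le hb.2
  have key : ∀ n j : ℕ, 1 ≤ n → k ≤ j → b' (n + j) ≤ b n := by
    intro n j hn hj
    have h1 : n + j = (n + (j - k)) + k := by omega
    rw [h1]
    exact le_trans (hcon _ (by omega)) (hbmono (by omega))
  rw [asympResurgence, asympResurgence]
  apply le_antisymm
  · apply sSup_le_sSup
    rintro x ⟨s, r, hs, hr, hev, rfl⟩
    refine ⟨s, r, hs, hr, ?_, rfl⟩
    filter_upwards [hev, eventually_ge_atTop 1] with t ht ht1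
    intro hcontra
    exact ht (hcontra.trans (hle _ (Nat.mul_pos hr ht1)))
  · apply sSup_le
    rintro x ⟨s, r, hs, hr, hev, rfl⟩
    obtain ⟨T, hT⟩ := eventually_atTop.mp hev
    have hm : ∀ m : ℕ, 1 ≤ m →
        ((((s * m : ℕ) : ℝ) / ((r * m + k : ℕ) : ℝ) : ℝ) : EReal) ≤
          sSup {x : EReal | ∃ s r : ℕ, 0 < s ∧ 0 < r ∧
            (∀ᶠ t : ℕ in atTop, ¬ a (s * t) ≤ b' (r * t)) ∧
            x = (((s : ℝ) / (r : ℝ) : ℝ) : EReal)} := by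
      intro m hm1
      apply le_sSup
      refine ⟨s * m, r * m + k, Nat.mul_pos hs hm1, by positivity, ?_, rfl⟩
      filter_upwards [eventually_ge_atTop (max T 1)] with t ht
      have ht1 : 1 ≤ t := le_trans (le_max_right T 1) ht
      have htT : T ≤ m * t := le_trans (le_trans (le_max_left T 1) ht)
        (Nat.le_mul_of_pos_left t hm1)
      intro hcontra
      have hkey : b' ((r * m + k) * t) ≤ b (r * m * t) := by
        have h2 : (r * m + k) * t = r * m * t + k * t := by ring
        rw [h2]
        exact key (r * m * t) (k * t)
          (Nat.mul_pos (Nat.mul_pos hr hm1) ht1)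
          (Nat.le_mul_of_pos_right k ht1)
      have h3 : s * m * t = s * (m * t) := by ring
      have h4 : r * m * t = r * (m * t) := by ring
      exact hT (m * t) htT (by rw [← h4, ← h3]; exact hcontra.trans hkey)
    have htdR : Tendsto (fun m : ℕ => (((s * m : ℕ) : ℝ) / ((r * m + k : ℕ) : ℝ) : ℝ))
        atTop (nhds ((s : ℝ) / (r : ℝ))) := by
      have h0 : Tendsto (fun m : ℕ => (k : ℝ) / (m : ℝ)) atTop (nhds 0) :=
        tendsto_const_div_atTop_nhds_zero_nat (k : ℝ)
      have hrne : (r : ℝ) + 0 ≠ 0 := by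
        have : (0 : ℝ) < r := by exact_mod_cast hr
        simp only [add_zero]; exact ne_of_gt this
      have h1 : Tendsto (fun m : ℕ => (s : ℝ) / ((r : ℝ) + (k : ℝ) / (m : ℝ)))
          atTop (nhds ((s : ℝ) / ((r : ℝ) + 0))) :=
        tendsto_const_nhds.div (tendsto_const_nhds.add h0) hrne
      rw [add_zero] at h1
      apply h1.congr'
      filter_upwards [eventually_ge_atTop 1] with m hm1
      have hm0 : (0 : ℝ) < (m : ℝ) := by exact_mod_cast hm1
      have hr0 : (0 : ℝ) < (r : ℝ) := by exact_mod_cast hr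
      push_cast
      have hd1 : (r : ℝ) + (k : ℝ) / (m : ℝ) ≠ 0 := by positivity
      have hd2 : (r : ℝ) * (m : ℝ) + (k : ℝ) ≠ 0 := by positivity
      rw [div_eq_div_iff hd1 hd2]
      field_simp
    have htd : Tendsto (fun m : ℕ =>
        ((((s * m : ℕ) : ℝ) / ((r * m + k : ℕ) : ℝ) : ℝ) : EReal)) atTop
        (nhds (((s : ℝ) / (r : ℝ) : ℝ) : EReal)) := by
      exact (continuous_coe_real_ereal.tendsto _).comp htdR
    exact le_of_tendsto htd (eventually_atTop.mpr ⟨1, hm⟩)
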